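/- For every x ∈ U the matrix M(x) factorizes as M(x) = (I − Σ_{k=1}^{n} (2πi)^{−k} Li_k(x) E^{(k)}) · exp((2πi)^{−1} log(x) · N_0), where E^{(k)} is the matrix sending e_{n+1} to e_{n+1−k} and all other basis vectors to 0 and exp is the matrix exponential; moreover E^{(k)} = −(ad N_0)^{k−1}(N_1) for 1 ≤ k ≤ n, where (ad N_0)(M) := N_0 M − M N_0. -/

import Mathlib

open Complex

noncomputable section

/-- The nilpotent endomorphism `N₀` (as a matrix, 0-based indices):
`N₀ e_j = e_{j-1}` for `1 ≤ j ≤ n-1` (paper: `2 ≤ j ≤ n`), `N₀ e_0 = N₀ e_n = 0`. -/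
def N0 (n : ℕ) : Matrix (Fin (n + 1)) (Fin (n + 1)) ℂ :=
  fun i j => if (i : ℕ) + 1 = (j : ℕ) ∧ (j : ℕ) < n then 1 else 0

/-- The nilpotent endomorphism `N₁` (0-based indices): `N₁ e_n = -e_{n-1}`
(paper: `N₁ e_{n+1} = -e_n`), and `N₁ e_j = 0` otherwise. -/
def N1 (n : ℕ) : Matrix (Fin (n + 1)) (Fin (n + 1)) ℂ :=
  fun i j => if (i : ℕ) + 1 = n ∧ (j : ℕ) = n then -1 else 0

/-- `ad N₀` acting on matrices: `(ad N₀)(M) = N₀ M - M N₀`. -/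
def adN0 (n : ℕ) : Matrix (Fin (n + 1)) (Fin (n + 1)) ℂ → Matrix (Fin (n + 1)) (Fin (n + 1)) ℂ :=
  fun M => N0 n * M - M * N0 n

/-- The polylogarithm `Li_j(x) = ∑_{k≥1} x^k / k^j`, for `|x| < 1`. -/
def Li (j : ℕ) (x : ℂ) : ℂ := ∑' k : ℕ, x ^ (k + 1) / ((k : ℂ) + 1) ^ j

/-- The slit open unit disc `U = {x : |x| < 1, x ∉ ℝ_{≤0}}`. -/
def U : Set ℂ := {x | ‖x‖ < 1 ∧ ¬(x.im = 0 ∧ x.re ≤ 0)}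

/-- The matrix `M(x)` of solutions (0-based indices): diagonal entries `1`,
`M(x)_{i,j} = ((2πi)⁻¹ log x)^{j-i}/(j-i)!` for `i < j < n` (paper: `1 ≤ j < k ≤ n`),
`M(x)_{i,n} = -(2πi)^{-(n-i)} Li_{n-i}(x)` for `i < n` (paper: `M_{j,n+1}`, `1 ≤ j ≤ n`). -/
def Mmat (n : ℕ) (x : ℂ) : Matrix (Fin (n + 1)) (Fin (n + 1)) ℂ := fun i j =>
  if i = j then 1
  else if (i : ℕ) < (j : ℕ) ∧ (j : ℕ) < n then
    ((2 * (Real.pi : ℂ) * I)⁻¹ * Complex.log x) ^ ((j : ℕ) - (i : ℕ)) / ((j : ℕ) - (i : ℕ)).factorial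
  else if (i : ℕ) < (j : ℕ) ∧ (j : ℕ) = n then
    -((2 * (Real.pi : ℂ) * I)⁻¹) ^ (n - (i : ℕ)) * Li (n - (i : ℕ)) x
  else 0

/-- The matrix `E^{(k)}` sending `e_n` (paper: `e_{n+1}`) to `e_{n-k}` (paper: `e_{n+1-k}`)
and the other basis vectors to `0`. -/
def Emat (n k : ℕ) : Matrix (Fin (n + 1)) (Fin (n + 1)) ℂ := fun i j =>
  if (i : ℕ) = n - k ∧ (j : ℕ) = n then 1 else 0


lemma N0_pow_apply (n m : ℕ) (i j : Fin (n+1)) :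
    (N0 n ^ m) i j = if (i : ℕ) + m = (j : ℕ) ∧ ((j : ℕ) < n ∨ m = 0) then 1 else 0 := by
  induction m generalizing j with
  | zero =>
    rw [pow_zero, Matrix.one_apply]
    have h : ((i : ℕ) + 0 = (j : ℕ) ∧ ((j:ℕ) < n ∨ 0 = 0)) ↔ i = j := by
      rw [Fin.ext_iff]; omega
    rw [if_congr h.symm rfl rfl]
  | succ m ih =>
    rw [pow_succ, Matrix.mul_apply]
    have hjlt : (j:ℕ) - 1 < n + 1 := by omega
    have step : ∀ l : Fin (n+1), (N0 n ^ m) i l * N0 n l j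
        = if l = (⟨(j:ℕ) - 1, hjlt⟩ : Fin (n+1)) then
            (if (i:ℕ) + (m+1) = (j:ℕ) ∧ (j:ℕ) < n then 1 else 0) else 0 := by
      intro l
      have hi := i.isLt; have hj := j.isLt; have hl := l.isLt
      rw [ih]
      simp only [N0, Fin.ext_iff, Fin.val_mk, ite_mul, one_mul, zero_mul]
      split_ifs <;> first | rfl | (exfalso; omega)
    rw [Finset.sum_congr rfl (fun l _ => step l),
      Finset.sum_ite_eq' Finset.univ (⟨(j:ℕ) - 1, hjlt⟩ : Fin (n+1)), if_pos (Finset.mem_univ _)]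
    exact if_congr (by omega) rfl rfl

lemma N0_pow_eq_zero (n m : ℕ) (hm : n + 1 ≤ m) : N0 n ^ m = 0 := by
  ext i j
  rw [N0_pow_apply, Matrix.zero_apply, if_neg]
  have := j.isLt
  omega

lemma exp_smul_N0 (n : ℕ) (t : ℂ) (i j : Fin (n+1)) :
    NormedSpace.exp (t • N0 n) i j =
      if (i:ℕ) ≤ (j:ℕ) ∧ ((j:ℕ) < n ∨ (i:ℕ) = (j:ℕ)) then
        t ^ ((j:ℕ) - (i:ℕ)) / (((j:ℕ) - (i:ℕ)).factorial : ℂ) else 0 := by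
  have hexp : NormedSpace.exp (t • N0 n)
      = ∑ m ∈ Finset.range (n+1), (m.factorial : ℂ)⁻¹ • (t • N0 n) ^ m := by
    rw [NormedSpace.exp_eq_tsum ℂ]
    exact tsum_eq_sum fun m hm => by
      rw [smul_pow, N0_pow_eq_zero n m (by simpa using Nat.succ_le_of_lt (by
        simpa [Finset.mem_range, not_lt] using hm))]
      simp
  rw [hexp, Matrix.sum_apply]
  have hi := i.isLt; have hj := j.isLt
  have step : ∀ m ∈ Finset.range (n+1),
      ((m.factorial : ℂ)⁻¹ • (t • N0 n) ^ m) i j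
        = if m = (j:ℕ) - (i:ℕ) then
            (if (i:ℕ) ≤ (j:ℕ) ∧ ((j:ℕ) < n ∨ (i:ℕ) = (j:ℕ)) then
              t ^ ((j:ℕ) - (i:ℕ)) / (((j:ℕ) - (i:ℕ)).factorial : ℂ) else 0) else 0 := by
    intro m _
    rw [smul_pow, Matrix.smul_apply, Matrix.smul_apply, N0_pow_apply, smul_eq_mul, smul_eq_mul]
    by_cases h : m = (j:ℕ) - (i:ℕ)
    · subst h
      rw [if_pos rfl]
      by_cases hB : (i:ℕ) ≤ (j:ℕ) ∧ ((j:ℕ) < n ∨ (i:ℕ) = (j:ℕ))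
      · rw [if_pos hB, if_pos (by omega), div_eq_mul_inv]; ring
      · rw [if_neg hB, if_neg (by omega)]; ring
    · rw [if_neg h, if_neg (by omega)]; ring
  rw [Finset.sum_congr rfl step, Finset.sum_ite_eq' (Finset.range (n+1)),
    if_pos (Finset.mem_range.mpr (by omega))]

lemma N0_mul_Emat (n k : ℕ) (hk : 1 ≤ k) (hkn : k < n) :
    N0 n * Emat n k = Emat n (k+1) := by
  ext i j
  rw [Matrix.mul_apply]
  have hlt : n - k < n + 1 := by omega
  have step : ∀ l : Fin (n+1), N0 n i l * Emat n k l j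
      = if l = (⟨n - k, hlt⟩ : Fin (n+1)) then
          (if (i:ℕ) = n - (k+1) ∧ (j:ℕ) = n then 1 else 0) else 0 := by
    intro l
    have hi := i.isLt; have hj := j.isLt; have hl := l.isLt
    simp only [N0, Emat, Fin.ext_iff, Fin.val_mk, ite_mul, one_mul, zero_mul]
    split_ifs <;> first | rfl | (exfalso; omega)
  rw [Finset.sum_congr rfl (fun l _ => step l),
    Finset.sum_ite_eq' Finset.univ (⟨n - k, hlt⟩ : Fin (n+1)), if_pos (Finset.mem_univ _)]
  rfl

lemma Emat_mul_N0 (n k : ℕ) : Emat n k * N0 n = 0 := by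
  ext i j
  rw [Matrix.mul_apply, Matrix.zero_apply]
  refine Finset.sum_eq_zero fun l _ => ?_
  have hj := j.isLt; have hl := l.isLt
  simp only [Emat, N0, ite_mul, one_mul, zero_mul]
  split_ifs <;> first | rfl | (exfalso; omega)

lemma part2 (n : ℕ) (hn : 1 ≤ n) :
    ∀ k : ℕ, 1 ≤ k → k ≤ n → Emat n k = -((adN0 n)^[k - 1] (N1 n)) := by
  have key : ∀ m, m + 1 ≤ n → (adN0 n)^[m] (N1 n) = -Emat n (m+1) := by
    intro m
    induction m with
    | zero =>
      intro _
      simp only [Function.iterate_zero, id_eq]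
      ext i j
      have hi := i.isLt; have hj := j.isLt
      simp only [N1, Emat, Matrix.neg_apply]
      split_ifs <;> first | rfl | (exfalso; omega) | exact neg_zero.symm
    | succ m ih =>
      intro hm
      rw [Function.iterate_succ_apply', ih (by omega)]
      show N0 n * -Emat n (m+1) - -Emat n (m+1) * N0 n = -Emat n (m+1+1)
      rw [mul_neg, neg_mul, sub_neg_eq_add, N0_mul_Emat n (m+1) (by omega) (by omega),
        Emat_mul_N0, add_zero]
  intro k hk1 hkn
  have h := key (k-1) (by omega)
  rw [Nat.sub_add_cancel hk1] at h
  rw [h, neg_neg]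

lemma part1 (n : ℕ) (hn : 1 ≤ n) (x : ℂ) :
    Mmat n x =
      (1 - ∑ k ∈ Finset.Icc 1 n, (((2 * (Real.pi : ℂ) * I)⁻¹) ^ k * Li k x) • Emat n k) *
        NormedSpace.exp (((2 * (Real.pi : ℂ) * I)⁻¹ * Complex.log x) • N0 n) := by
  set A : ℂ := (2 * (Real.pi : ℂ) * I)⁻¹ with hA
  set t : ℂ := A * Complex.log x with ht
  ext i j
  have hi := i.isLt; have hj := j.isLt
  rw [Matrix.mul_apply]
  -- left factor entries
  have hfac : ∀ l : Fin (n+1),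
      (1 - ∑ k ∈ Finset.Icc 1 n, (A ^ k * Li k x) • Emat n k) i l
        = (if i = l then 1 else 0)
          - (if (i:ℕ) < n ∧ (l:ℕ) = n then A ^ (n - (i:ℕ)) * Li (n - (i:ℕ)) x else 0) := by
    intro l
    simp only [Matrix.sub_apply, Matrix.one_apply, Matrix.sum_apply, Matrix.smul_apply, Emat,
      smul_eq_mul, mul_ite, mul_one, mul_zero]
    congr 1
    have step : ∀ k ∈ Finset.Icc 1 n,
        (if (i:ℕ) = n - k ∧ (l:ℕ) = n then A ^ k * Li k x else 0)
          = if k = n - (i:ℕ) then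
              (if (i:ℕ) < n ∧ (l:ℕ) = n then A ^ (n - (i:ℕ)) * Li (n - (i:ℕ)) x else 0) else 0 := by
      intro k hk
      simp only [Finset.mem_Icc] at hk
      by_cases h : k = n - (i:ℕ)
      · subst h
        rw [if_pos rfl, if_congr (show ((i:ℕ) = n - (n - (i:ℕ)) ∧ (l:ℕ) = n)
            ↔ ((i:ℕ) < n ∧ (l:ℕ) = n) from by omega) rfl rfl]
      · rw [if_neg h, if_neg (by omega)]
    rw [Finset.sum_congr rfl step, Finset.sum_ite_eq' (Finset.Icc 1 n)]
    simp only [Finset.mem_Icc]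
    split_ifs <;> first | rfl | (exfalso; omega)
  rw [Finset.sum_congr rfl (fun l _ => by rw [hfac l, sub_mul])]
  rw [Finset.sum_sub_distrib]
  -- first sum: picks l = i
  have hsum1 : ∑ l : Fin (n+1), (if i = l then (1:ℂ) else 0)
      * NormedSpace.exp (t • N0 n) l j = NormedSpace.exp (t • N0 n) i j := by
    simp only [ite_mul, one_mul, zero_mul]
    rw [Finset.sum_ite_eq, if_pos (Finset.mem_univ _)]
  -- second sum: picks l = last
  have hsum2 : ∑ l : Fin (n+1),
      (if (i:ℕ) < n ∧ (l:ℕ) = n then A ^ (n - (i:ℕ)) * Li (n - (i:ℕ)) x else 0)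
        * NormedSpace.exp (t • N0 n) l j
      = (if (i:ℕ) < n then A ^ (n - (i:ℕ)) * Li (n - (i:ℕ)) x else 0)
          * (if (j:ℕ) = n then 1 else 0) := by
    have step2 : ∀ l : Fin (n+1),
        (if (i:ℕ) < n ∧ (l:ℕ) = n then A ^ (n - (i:ℕ)) * Li (n - (i:ℕ)) x else 0)
          * NormedSpace.exp (t • N0 n) l j
        = if l = Fin.last n then
            (if (i:ℕ) < n then A ^ (n - (i:ℕ)) * Li (n - (i:ℕ)) x else 0)
              * (if (j:ℕ) = n then 1 else 0) else 0 := by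
      intro l
      by_cases hl : l = Fin.last n
      · subst hl
        rw [if_pos rfl, exp_smul_N0]
        simp only [Fin.val_last, and_true]
        congr 1
        by_cases hjn : (j:ℕ) = n
        · rw [if_pos (show n ≤ (j:ℕ) ∧ ((j:ℕ) < n ∨ n = (j:ℕ)) from by omega), if_pos hjn,
            show (j:ℕ) - n = 0 from by omega]
          simp
        · rw [if_neg (show ¬(n ≤ (j:ℕ) ∧ ((j:ℕ) < n ∨ n = (j:ℕ))) from by omega), if_neg hjn]
      · rw [if_neg hl, if_neg (fun h => hl (Fin.ext (by rw [h.2, Fin.val_last]))), zero_mul]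
    rw [Finset.sum_congr rfl (fun l _ => step2 l),
      Finset.sum_ite_eq' Finset.univ (Fin.last n), if_pos (Finset.mem_univ _)]
  rw [hsum1, hsum2, exp_smul_N0]
  -- final case analysis
  rcases lt_trichotomy ((i:ℕ)) ((j:ℕ)) with hij | hij | hij
  · have hne : i ≠ j := fun h => by omega
    rw [Mmat, if_neg hne]
    by_cases hjn : (j:ℕ) < n
    · rw [if_pos ⟨hij, hjn⟩, if_pos ⟨by omega, Or.inl hjn⟩,
        if_neg (show ¬((j:ℕ) = n) from by omega), mul_zero, sub_zero]
    · have hjn' : (j:ℕ) = n := by omega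
      rw [if_neg (show ¬((i:ℕ) < (j:ℕ) ∧ (j:ℕ) < n) from by omega), if_pos ⟨hij, hjn'⟩,
        if_neg (show ¬((i:ℕ) ≤ (j:ℕ) ∧ ((j:ℕ) < n ∨ (i:ℕ) = (j:ℕ))) from by omega),
        if_pos hjn', if_pos (show (i:ℕ) < n from by omega), mul_one, zero_sub, neg_mul]
  · have he : i = j := Fin.ext hij
    rw [Mmat, if_pos he, if_pos ⟨by omega, by omega⟩, show (j:ℕ) - (i:ℕ) = 0 from by omega]
    have hz : (if (i:ℕ) < n then A ^ (n - (i:ℕ)) * Li (n - (i:ℕ)) x else 0)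
        * (if (j:ℕ) = n then (1:ℂ) else 0) = 0 := by
      by_cases hin : (i:ℕ) < n
      · rw [if_neg (show ¬((j:ℕ) = n) from by omega), mul_zero]
      · rw [if_neg hin, zero_mul]
    rw [hz, sub_zero]
    simp
  · have hne : i ≠ j := fun h => by omega
    rw [Mmat, if_neg hne, if_neg (show ¬((i:ℕ) < (j:ℕ) ∧ (j:ℕ) < n) from by omega),
      if_neg (show ¬((i:ℕ) < (j:ℕ) ∧ (j:ℕ) = n) from by omega),
      if_neg (show ¬((i:ℕ) ≤ (j:ℕ) ∧ ((j:ℕ) < n ∨ (i:ℕ) = (j:ℕ))) from by omega),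
      if_neg (show ¬((j:ℕ) = n) from by omega), mul_zero, sub_zero]

/-- For `x ∈ U`, `M(x) = (I - ∑_{k=1}^n (2πi)^{-k} Li_k(x) E^{(k)}) ⬝ exp((2πi)⁻¹ log(x) N₀)`;
moreover `E^{(k)} = -(ad N₀)^{k-1}(N₁)` for `1 ≤ k ≤ n`. -/
theorem Mmat_factorization (n : ℕ) (hn : 1 ≤ n) :
    (∀ x ∈ U, Mmat n x =
      (1 - ∑ k ∈ Finset.Icc 1 n, (((2 * (Real.pi : ℂ) * I)⁻¹) ^ k * Li k x) • Emat n k) *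
        NormedSpace.exp (((2 * (Real.pi : ℂ) * I)⁻¹ * Complex.log x) • N0 n)) ∧
    (∀ k : ℕ, 1 ≤ k → k ≤ n → Emat n k = -((adN0 n)^[k - 1] (N1 n))) := by
  exact ⟨fun x _ => part1 n hn x, part2 n hn⟩
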